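/- Let ℓ ≥ 1 be a natural number, let n = (2ℓ+1)³, let a > 0 and r > 0 be real numbers with 2r < a, and let y₁, …, y_n ∈ ℝ³ be the n points of the scaled lattice cube a·L_ℓ (i.e. the points (i₁a, i₂a, i₃a) with integer 1 ≤ i₁, i₂, i₃ ≤ 2ℓ+1). Define R_eff = (r^n · ∏_{i<j} |y_i − y_j|²)^{1/n²}, the product over all unordered pairs of distinct points. Then e^{−1/3}·(r/a)^{1/n}·ℓ·a ≤ R_eff ≤ 2√3·(r/a)^{1/n}·ℓ·a. -/

import Mathlib

open Finset

/-- The point of `ℝ³` (with the Euclidean metric) corresponding to an integer triple. -/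
noncomputable def pt (i : ℤ × ℤ × ℤ) : EuclideanSpace ℝ (Fin 3) :=
  (WithLp.equiv 2 (Fin 3 → ℝ)).symm ![(i.1 : ℝ), (i.2.1 : ℝ), (i.2.2 : ℝ)]

/-- The lattice cube `L_ℓ`: integer triples `(i₁,i₂,i₃)` with `1 ≤ i₁,i₂,i₃ ≤ 2ℓ+1`. -/
noncomputable def latticeCube (ℓ : ℕ) : Finset (ℤ × ℤ × ℤ) :=
  Finset.Icc 1 (2 * (ℓ : ℤ) + 1) ×ˢ Finset.Icc 1 (2 * (ℓ : ℤ) + 1) ×ˢ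
    Finset.Icc 1 (2 * (ℓ : ℤ) + 1)

section Aux

def mN (z : ℤ × ℤ × ℤ) : ℕ := max z.1.natAbs (max z.2.1.natAbs z.2.2.natAbs)

noncomputable def Cube (k : ℕ) : Finset (ℤ × ℤ × ℤ) :=
  Finset.Icc (-(k:ℤ)) k ×ˢ Finset.Icc (-(k:ℤ)) k ×ˢ Finset.Icc (-(k:ℤ)) k

lemma dist_pt (x y : ℤ × ℤ × ℤ) :
    dist (pt x) (pt y) = Real.sqrt (((x.1 - y.1 : ℤ) : ℝ)^2 + ((x.2.1 - y.2.1 : ℤ) : ℝ)^2 +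
      ((x.2.2 - y.2.2 : ℤ) : ℝ)^2) := by
  rw [EuclideanSpace.dist_eq]
  simp [pt, Fin.sum_univ_three, Real.dist_eq]

lemma mem_lattice {ℓ : ℕ} {z : ℤ × ℤ × ℤ} : z ∈ latticeCube ℓ ↔
    (1 ≤ z.1 ∧ z.1 ≤ 2*(ℓ:ℤ)+1) ∧ (1 ≤ z.2.1 ∧ z.2.1 ≤ 2*(ℓ:ℤ)+1) ∧
      (1 ≤ z.2.2 ∧ z.2.2 ≤ 2*(ℓ:ℤ)+1) := by
  unfold latticeCube
  simp only [Finset.mem_product, Finset.mem_Icc]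

lemma mem_cube {k : ℕ} {z : ℤ × ℤ × ℤ} : z ∈ Cube k ↔
    (-(k:ℤ) ≤ z.1 ∧ z.1 ≤ k) ∧ (-(k:ℤ) ≤ z.2.1 ∧ z.2.1 ≤ k) ∧ (-(k:ℤ) ≤ z.2.2 ∧ z.2.2 ≤ k) := by
  unfold Cube
  simp only [Finset.mem_product, Finset.mem_Icc]

lemma lattice_card (ℓ : ℕ) : (latticeCube ℓ).card = (2*ℓ+1)^3 := by
  have h : (Finset.Icc (1:ℤ) (2*(ℓ:ℤ)+1)).card = 2*ℓ+1 := by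
    rw [Int.card_Icc]; omega
  unfold latticeCube
  rw [Finset.card_product, Finset.card_product, h]
  ring

lemma cube_card (k : ℕ) : (Cube k).card = (2*k+1)^3 := by
  have h : (Finset.Icc (-(k:ℤ)) k).card = 2*k+1 := by
    rw [Int.card_Icc]; omega
  unfold Cube
  rw [Finset.card_product, Finset.card_product, h]
  ring

lemma cube_subset {k : ℕ} : Cube k ⊆ Cube (k+1) := by
  intro z hz; rw [mem_cube] at *; push_cast at *; omega

lemma shell_mN {k : ℕ} {z : ℤ × ℤ × ℤ} (h1 : z ∈ Cube (k+1)) (h2 : z ∉ Cube k) :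
    mN z = k + 1 := by
  rw [mem_cube] at h1 h2; unfold mN; push_cast at *; omega

lemma mN_pos {z : ℤ × ℤ × ℤ} (h : z ≠ 0) : 1 ≤ mN z := by
  unfold mN
  rcases z with ⟨u, v, w⟩
  have huvw : u ≠ 0 ∨ v ≠ 0 ∨ w ≠ 0 := by
    by_contra hc
    push_neg at hc
    exact h (by simp [Prod.ext_iff, hc.1, hc.2.1, hc.2.2])
  rcases huvw with h1 | h1 | h1
  · exact le_trans (by omega : 1 ≤ u.natAbs) (le_max_left _ _)
  · exact le_trans (by omega : 1 ≤ v.natAbs) (le_trans (le_max_left _ _) (le_max_right _ _))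
  · exact le_trans (by omega : 1 ≤ w.natAbs) (le_trans (le_max_right _ _) (le_max_right _ _))

lemma cube_sum_lb (ℓ : ℕ) :
    ((2*(ℓ:ℝ)+1))^3 * (Real.log ℓ - 1/3) ≤ ∑ z ∈ (Cube ℓ).erase 0, Real.log (mN z) := by
  induction ℓ with
  | zero =>
      have he : (Cube 0).erase 0 = ∅ := by
        ext z
        simp only [Finset.mem_erase, mem_cube, Finset.notMem_empty, iff_false,
          Nat.cast_zero, neg_zero]
        rintro ⟨hne, h⟩
        exact hne (by
          obtain ⟨⟨a1, a2⟩, ⟨b1, b2⟩, c1, c2⟩ := h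
          simp only [Prod.ext_iff, Prod.fst_zero, Prod.snd_zero]
          exact ⟨by omega, by omega, by omega⟩)
      rw [he]
      simp [Real.log_zero]
  | succ k ih =>
      have hsub : (Cube k).erase 0 ⊆ (Cube (k+1)).erase 0 :=
        Finset.erase_subset_erase _ cube_subset
      have hzero : (0 : ℤ×ℤ×ℤ) ∈ Cube k := by rw [mem_cube]; norm_num
      have hdiff : ((Cube (k+1)).erase 0) \ ((Cube k).erase 0) = Cube (k+1) \ Cube k := by
        ext z
        simp only [Finset.mem_sdiff, Finset.mem_erase]
        constructor
        · rintro ⟨⟨hz0, hz1⟩, hz2⟩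
          exact ⟨hz1, fun h => hz2 ⟨hz0, h⟩⟩
        · rintro ⟨hz1, hz2⟩
          exact ⟨⟨fun h => hz2 (h ▸ hzero), hz1⟩, fun h => hz2 h.2⟩
      have hsplit := Finset.sum_sdiff (f := fun z => Real.log (mN z)) hsub
      rw [hdiff] at hsplit
      have hcard : (Cube (k+1) \ Cube k).card = (2*k+3)^3 - (2*k+1)^3 := by
        rw [Finset.card_sdiff_of_subset cube_subset, cube_card, cube_card]
        have : 2*(k+1)+1 = 2*k+3 := by omega
        rw [this]
      have hshell : ∑ z ∈ Cube (k+1) \ Cube k, Real.log (mN z)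
          = ((2*(k:ℝ)+3)^3 - (2*(k:ℝ)+1)^3) * Real.log ((k:ℝ)+1) := by
        have hc : ∑ z ∈ Cube (k+1) \ Cube k, Real.log (mN z)
            = ∑ _z ∈ Cube (k+1) \ Cube k, Real.log ((k+1 : ℕ) : ℝ) := by
          refine Finset.sum_congr rfl fun z hz => ?_
          rw [Finset.mem_sdiff] at hz
          rw [shell_mN hz.1 hz.2]
        rw [hc, Finset.sum_const, hcard, nsmul_eq_mul]
        have h1 : ((2*k+1)^3 : ℕ) ≤ (2*k+3)^3 := by
          apply Nat.pow_le_pow_left; omega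
        push_cast [h1]
        ring
      rcases Nat.eq_zero_or_pos k with hk | hk
      · subst hk
        have hge : (0:ℝ) ≤ ∑ z ∈ (Cube 1).erase 0, Real.log (mN z) := by
          apply Finset.sum_nonneg
          intro z hz
          apply Real.log_nonneg
          exact_mod_cast mN_pos (Finset.ne_of_mem_erase hz)
        push_cast
        nlinarith [hge, Real.log_one]
      · have hk1 : (1:ℝ) ≤ (k:ℝ) := by exact_mod_cast hk
        have hK : (0:ℝ) < (k:ℝ) := by linarith
        have hlog : Real.log ((k:ℝ)+1) - Real.log k ≤ 1/(k:ℝ) := by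
          have h := Real.log_le_sub_one_of_pos (x := ((k:ℝ)+1)/k) (by positivity)
          rw [Real.log_div (by positivity) (by positivity)] at h
          have h2 : ((k:ℝ)+1)/k - 1 = 1/k := by field_simp; ring
          linarith [h2 ▸ h]
        have h1 : (2*(k:ℝ)+1)^3 * (Real.log ((k:ℝ)+1) - Real.log k)
            ≤ (2*(k:ℝ)+1)^3 * (1/k) := by
          apply mul_le_mul_of_nonneg_left hlog (by positivity)
        have h2 : (2*(k:ℝ)+1)^3 * (1/k) ≤ ((2*(k:ℝ)+3)^3 - (2*(k:ℝ)+1)^3)/3 := by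
          rw [mul_one_div, div_le_div_iff₀ hK (by norm_num)]
          nlinarith [hk1]
        rw [← hsplit, hshell]
        push_cast
        push_cast at ih
        linarith [ih, h1, h2]

lemma abs_sub_le_dist (x y : ℤ × ℤ × ℤ) :
    |((x.1 - y.1 : ℤ) : ℝ)| ≤ dist (pt x) (pt y) ∧
    |((x.2.1 - y.2.1 : ℤ) : ℝ)| ≤ dist (pt x) (pt y) ∧
    |((x.2.2 - y.2.2 : ℤ) : ℝ)| ≤ dist (pt x) (pt y) := by
  rw [dist_pt]
  refine ⟨?_, ?_, ?_⟩ <;>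
  · rw [← Real.sqrt_sq_eq_abs]
    apply Real.sqrt_le_sqrt
    nlinarith [sq_nonneg ((x.1 - y.1 : ℤ) : ℝ), sq_nonneg ((x.2.1 - y.2.1 : ℤ) : ℝ),
      sq_nonneg ((x.2.2 - y.2.2 : ℤ) : ℝ)]

lemma mN_le_dist {x y z : ℤ × ℤ × ℤ}
    (h1 : z.1.natAbs ≤ (x.1 - y.1).natAbs)
    (h2 : z.2.1.natAbs ≤ (x.2.1 - y.2.1).natAbs)
    (h3 : z.2.2.natAbs ≤ (x.2.2 - y.2.2).natAbs) :
    (mN z : ℝ) ≤ dist (pt x) (pt y) := by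
  obtain ⟨d1, d2, d3⟩ := abs_sub_le_dist x y
  unfold mN
  push_cast
  refine max_le ?_ (max_le ?_ ?_)
  · calc ((z.1.natAbs : ℝ)) ≤ ((x.1 - y.1).natAbs : ℝ) := by exact_mod_cast h1
      _ = |((x.1 - y.1 : ℤ) : ℝ)| := by rw [Nat.cast_natAbs, Int.cast_abs]
      _ ≤ _ := d1
  · calc ((z.2.1.natAbs : ℝ)) ≤ ((x.2.1 - y.2.1).natAbs : ℝ) := by exact_mod_cast h2
      _ = |((x.2.1 - y.2.1 : ℤ) : ℝ)| := by rw [Nat.cast_natAbs, Int.cast_abs]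
      _ ≤ _ := d2
  · calc ((z.2.2.natAbs : ℝ)) ≤ ((x.2.2 - y.2.2).natAbs : ℝ) := by exact_mod_cast h3
      _ = |((x.2.2 - y.2.2 : ℤ) : ℝ)| := by rw [Nat.cast_natAbs, Int.cast_abs]
      _ ≤ _ := d3

lemma one_le_dist {x y : ℤ × ℤ × ℤ} (h : x ≠ y) : 1 ≤ dist (pt x) (pt y) := by
  have hd : 1 ≤ mN (x.1 - y.1, x.2.1 - y.2.1, x.2.2 - y.2.2) := by
    apply mN_pos
    intro hc
    apply h
    simp only [Prod.ext_iff, Prod.fst_zero, Prod.snd_zero] at hc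
    rcases x with ⟨u,v,w⟩; rcases y with ⟨u',v',w'⟩
    simp only [Prod.ext_iff]
    simp only at hc
    exact ⟨by omega, by omega, by omega⟩
  calc (1:ℝ) ≤ (mN (x.1 - y.1, x.2.1 - y.2.1, x.2.2 - y.2.2) : ℝ) := by exact_mod_cast hd
    _ ≤ dist (pt x) (pt y) := mN_le_dist (by simp) (by simp) (by simp)

lemma dist_le_diag {ℓ : ℕ} {x y : ℤ × ℤ × ℤ} (hx : x ∈ latticeCube ℓ) (hy : y ∈ latticeCube ℓ) :
    dist (pt x) (pt y) ≤ 2 * Real.sqrt 3 * ℓ := by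
  rw [mem_lattice] at hx hy
  rw [dist_pt]
  have key : ((x.1 - y.1 : ℤ) : ℝ)^2 + ((x.2.1 - y.2.1 : ℤ) : ℝ)^2 + ((x.2.2 - y.2.2 : ℤ) : ℝ)^2
      ≤ (2 * Real.sqrt 3 * ℓ)^2 := by
    have e : (2 * Real.sqrt 3 * (ℓ:ℝ))^2 = 12 * (ℓ:ℝ)^2 := by
      have : Real.sqrt 3 ^ 2 = 3 := Real.sq_sqrt (by norm_num)
      nlinarith [this]
    rw [e]
    have b1 : ((x.1 - y.1 : ℤ) : ℝ)^2 ≤ (2*(ℓ:ℝ))^2 := by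
      have h' : (-(2*(ℓ:ℤ)) ≤ x.1 - y.1) ∧ x.1 - y.1 ≤ 2*(ℓ:ℤ) := by omega
      have c1 : (-(2*(ℓ:ℝ)) ≤ ((x.1 - y.1 : ℤ):ℝ)) := by exact_mod_cast h'.1
      have c2 : ((x.1 - y.1 : ℤ):ℝ) ≤ 2*(ℓ:ℝ) := by exact_mod_cast h'.2
      nlinarith [c1, c2]
    have b2 : ((x.2.1 - y.2.1 : ℤ) : ℝ)^2 ≤ (2*(ℓ:ℝ))^2 := by
      have h' : (-(2*(ℓ:ℤ)) ≤ x.2.1 - y.2.1) ∧ x.2.1 - y.2.1 ≤ 2*(ℓ:ℤ) := by omega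
      have c1 : (-(2*(ℓ:ℝ)) ≤ ((x.2.1 - y.2.1 : ℤ):ℝ)) := by exact_mod_cast h'.1
      have c2 : ((x.2.1 - y.2.1 : ℤ):ℝ) ≤ 2*(ℓ:ℝ) := by exact_mod_cast h'.2
      nlinarith [c1, c2]
    have b3 : ((x.2.2 - y.2.2 : ℤ) : ℝ)^2 ≤ (2*(ℓ:ℝ))^2 := by
      have h' : (-(2*(ℓ:ℤ)) ≤ x.2.2 - y.2.2) ∧ x.2.2 - y.2.2 ≤ 2*(ℓ:ℤ) := by omega
      have c1 : (-(2*(ℓ:ℝ)) ≤ ((x.2.2 - y.2.2 : ℤ):ℝ)) := by exact_mod_cast h'.1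
      have c2 : ((x.2.2 - y.2.2 : ℤ):ℝ) ≤ 2*(ℓ:ℝ) := by exact_mod_cast h'.2
      nlinarith [c1, c2]
    nlinarith [b1, b2, b3]
  calc Real.sqrt _ ≤ Real.sqrt ((2 * Real.sqrt 3 * ℓ)^2) := Real.sqrt_le_sqrt key
    _ = 2 * Real.sqrt 3 * ℓ := Real.sqrt_sq (by positivity)

def psi (ℓ i j : ℤ) : ℤ := if -ℓ ≤ j - i ∧ j - i ≤ ℓ then j - i else ℓ + 1 - j
def psiInv (ℓ i z : ℤ) : ℤ := if 1 ≤ z + i ∧ z + i ≤ 2*ℓ+1 then z + i else ℓ + 1 - z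

lemma psi_mem {ℓ i j : ℤ} (hi : 1 ≤ i ∧ i ≤ 2*ℓ+1) (hj : 1 ≤ j ∧ j ≤ 2*ℓ+1) :
    -ℓ ≤ psi ℓ i j ∧ psi ℓ i j ≤ ℓ := by unfold psi; split_ifs <;> omega

lemma psiInv_mem {ℓ i z : ℤ} (hi : 1 ≤ i ∧ i ≤ 2*ℓ+1) (hz : -ℓ ≤ z ∧ z ≤ ℓ) :
    1 ≤ psiInv ℓ i z ∧ psiInv ℓ i z ≤ 2*ℓ+1 := by unfold psiInv; split_ifs <;> omega

lemma psiInv_psi {ℓ i j : ℤ} (hi : 1 ≤ i ∧ i ≤ 2*ℓ+1) (hj : 1 ≤ j ∧ j ≤ 2*ℓ+1) :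
    psiInv ℓ i (psi ℓ i j) = j := by unfold psi psiInv; split_ifs <;> omega

lemma psi_psiInv {ℓ i z : ℤ} (hi : 1 ≤ i ∧ i ≤ 2*ℓ+1) (hz : -ℓ ≤ z ∧ z ≤ ℓ) :
    psi ℓ i (psiInv ℓ i z) = z := by unfold psi psiInv; split_ifs <;> omega

lemma psi_natAbs_le {ℓ i j : ℤ} (hi : 1 ≤ i ∧ i ≤ 2*ℓ+1) (hj : 1 ≤ j ∧ j ≤ 2*ℓ+1) :
    (psi ℓ i j).natAbs ≤ (j - i).natAbs := by unfold psi; split_ifs <;> omega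

lemma psi_eq_zero_iff {ℓ i j : ℤ} (hi : 1 ≤ i ∧ i ≤ 2*ℓ+1) (hj : 1 ≤ j ∧ j ≤ 2*ℓ+1) :
    psi ℓ i j = 0 ↔ j = i := by unfold psi; split_ifs <;> omega

lemma row_lb {ℓ : ℕ} {x : ℤ × ℤ × ℤ} (hx : x ∈ latticeCube ℓ) :
    ∑ z ∈ (Cube ℓ).erase 0, Real.log (mN z) ≤
      ∑ j ∈ (latticeCube ℓ).erase x, Real.log (dist (pt x) (pt j)) := by
  rw [mem_lattice] at hx
  obtain ⟨hx1, hx2, hx3⟩ := hx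
  set L := (ℓ:ℤ) with hL
  have key : ∑ j ∈ (latticeCube ℓ).erase x,
      Real.log (mN (psi L x.1 j.1, psi L x.2.1 j.2.1, psi L x.2.2 j.2.2)) =
      ∑ z ∈ (Cube ℓ).erase 0, Real.log (mN z) := by
    refine Finset.sum_nbij'
      (i := fun j => (psi L x.1 j.1, psi L x.2.1 j.2.1, psi L x.2.2 j.2.2))
      (j := fun z => (psiInv L x.1 z.1, psiInv L x.2.1 z.2.1, psiInv L x.2.2 z.2.2))
      ?_ ?_ ?_ ?_ ?_
    · intro j hj
      rw [Finset.mem_erase] at hj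
      obtain ⟨hjx, hj⟩ := hj
      rw [mem_lattice] at hj
      obtain ⟨h1, h2, h3⟩ := hj
      rw [Finset.mem_erase, mem_cube]
      refine ⟨?_, psi_mem hx1 h1, psi_mem hx2 h2, psi_mem hx3 h3⟩
      intro hzero
      apply hjx
      simp only [Prod.ext_iff, Prod.fst_zero, Prod.snd_zero] at hzero
      obtain ⟨e1, e2, e3⟩ := hzero
      rcases x with ⟨u,v,w⟩; rcases j with ⟨u',v',w'⟩
      simp only [Prod.ext_iff]
      exact ⟨(psi_eq_zero_iff hx1 h1).mp e1, (psi_eq_zero_iff hx2 h2).mp e2,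
        (psi_eq_zero_iff hx3 h3).mp e3⟩
    · intro z hz
      rw [Finset.mem_erase, mem_cube] at hz
      obtain ⟨hz0, h1, h2, h3⟩ := hz
      rw [Finset.mem_erase, mem_lattice]
      refine ⟨?_, psiInv_mem hx1 h1, psiInv_mem hx2 h2, psiInv_mem hx3 h3⟩
      intro hjx
      apply hz0
      simp only [Prod.ext_iff] at hjx
      obtain ⟨e1, e2, e3⟩ := hjx
      have g1 : psi L x.1 (psiInv L x.1 z.1) = z.1 := psi_psiInv hx1 h1
      have g2 : psi L x.2.1 (psiInv L x.2.1 z.2.1) = z.2.1 := psi_psiInv hx2 h2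
      have g3 : psi L x.2.2 (psiInv L x.2.2 z.2.2) = z.2.2 := psi_psiInv hx3 h3
      rw [e1] at g1; rw [e2] at g2; rw [e3] at g3
      have z1 : z.1 = 0 := by rw [← g1, psi_eq_zero_iff hx1 hx1]
      have z2 : z.2.1 = 0 := by rw [← g2, psi_eq_zero_iff hx2 hx2]
      have z3 : z.2.2 = 0 := by rw [← g3, psi_eq_zero_iff hx3 hx3]
      simp only [Prod.ext_iff, Prod.fst_zero, Prod.snd_zero]
      exact ⟨z1, z2, z3⟩
    · intro j hj
      rw [Finset.mem_erase, mem_lattice] at hj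
      obtain ⟨hjx, h1, h2, h3⟩ := hj
      simp only [Prod.ext_iff]
      exact ⟨psiInv_psi hx1 h1, psiInv_psi hx2 h2, psiInv_psi hx3 h3⟩
    · intro z hz
      rw [Finset.mem_erase, mem_cube] at hz
      obtain ⟨hz0, h1, h2, h3⟩ := hz
      simp only [Prod.ext_iff]
      exact ⟨psi_psiInv hx1 h1, psi_psiInv hx2 h2, psi_psiInv hx3 h3⟩
    · intro j hj
      rfl
  rw [← key]
  apply Finset.sum_le_sum
  intro j hj
  rw [Finset.mem_erase] at hj
  obtain ⟨hjx, hj'⟩ := hj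
  rw [mem_lattice] at hj'
  obtain ⟨h1, h2, h3⟩ := hj'
  have hz0 : (psi L x.1 j.1, psi L x.2.1 j.2.1, psi L x.2.2 j.2.2) ≠ (0 : ℤ×ℤ×ℤ) := by
    intro hzero
    apply hjx
    simp only [Prod.ext_iff, Prod.fst_zero, Prod.snd_zero] at hzero
    rcases x with ⟨u,v,w⟩; rcases j with ⟨u',v',w'⟩
    simp only [Prod.ext_iff]
    exact ⟨(psi_eq_zero_iff hx1 h1).mp hzero.1, (psi_eq_zero_iff hx2 h2).mp hzero.2.1,
      (psi_eq_zero_iff hx3 h3).mp hzero.2.2⟩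
  apply Real.log_le_log (by exact_mod_cast mN_pos hz0)
  have e1 : (psi L x.1 j.1).natAbs ≤ (x.1 - j.1).natAbs := by
    have := psi_natAbs_le hx1 h1; omega
  have e2 : (psi L x.2.1 j.2.1).natAbs ≤ (x.2.1 - j.2.1).natAbs := by
    have := psi_natAbs_le hx2 h2; omega
  have e3 : (psi L x.2.2 j.2.2).natAbs ≤ (x.2.2 - j.2.2).natAbs := by
    have := psi_natAbs_le hx3 h3; omega
  exact mN_le_dist e1 e2 e3

lemma sum_offDiag_eq {α : Type*} [DecidableEq α] (s : Finset α) (F : α → α → ℝ) :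
    ∑ p ∈ s.offDiag, F p.1 p.2 = ∑ x ∈ s, ∑ j ∈ s.erase x, F x j := by
  rw [show s.offDiag = (s ×ˢ s).filter (fun a => a.1 ≠ a.2) by
    ext; simp [Finset.mem_offDiag, and_assoc], Finset.sum_filter, Finset.sum_product]
  refine Finset.sum_congr rfl fun x hx => ?_
  rw [← Finset.sum_filter, Finset.filter_ne]

lemma sum_offDiag_two_mul {α : Type*} [DecidableEq α] [LinearOrder α] (s : Finset α)
    (F : α → α → ℝ) (hF : ∀ x y, F x y = F y x) :
    ∑ p ∈ s.offDiag, F p.1 p.2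
      = 2 * ∑ p ∈ s.offDiag.filter (fun p => p.1 < p.2), F p.1 p.2 := by
  rw [← Finset.sum_filter_add_sum_filter_not s.offDiag (fun p => p.1 < p.2)]
  have h : ∑ p ∈ s.offDiag.filter (fun p => ¬ p.1 < p.2), F p.1 p.2
      = ∑ p ∈ s.offDiag.filter (fun p => p.1 < p.2), F p.1 p.2 := by
    refine Finset.sum_nbij' (i := Prod.swap) (j := Prod.swap) ?_ ?_ ?_ ?_ ?_
    · intro p hp
      simp only [Finset.mem_filter, Finset.mem_offDiag] at *
      obtain ⟨⟨h1, h2, h3⟩, h4⟩ := hp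
      exact ⟨⟨h2, h1, Ne.symm h3⟩, lt_of_le_of_ne (not_lt.mp h4) (Ne.symm h3)⟩
    · intro p hp
      simp only [Finset.mem_filter, Finset.mem_offDiag] at *
      obtain ⟨⟨h1, h2, h3⟩, h4⟩ := hp
      exact ⟨⟨h2, h1, Ne.symm h3⟩, not_lt.mpr (le_of_lt h4)⟩
    · intro p _; simp
    · intro p _; simp
    · intro p _; exact hF p.1 p.2
  rw [h]; ring

lemma log_prod_sym2 {α : Type*} [DecidableEq α] [LinearOrder α] (s : Finset α)
    (F : {f : α → α → ℝ // ∀ x y, f x y = f y x})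
    (hpos : ∀ x y : α, x ≠ y → 0 < F.1 x y) :
    Real.log (∏ p ∈ s.sym2.filter (fun p => ¬ p.IsDiag), (Sym2.lift F p)^2)
      = ∑ p ∈ s.offDiag, Real.log (F.1 p.1 p.2) := by
  have hne : ∀ p ∈ s.sym2.filter (fun p => ¬ p.IsDiag), (Sym2.lift F p)^2 ≠ 0 := by
    intro p hp
    rw [Finset.mem_filter] at hp
    obtain ⟨hp1, hp2⟩ := hp
    induction p using Sym2.ind with
    | _ x y =>
      rw [Sym2.lift_mk]
      have hxy : x ≠ y := by
        intro h; exact hp2 (by rw [h]; exact Sym2.isDiag_iff_proj_eq |>.mpr rfl)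
      have := hpos x y hxy
      positivity
  have hterm : ∀ q ∈ s.offDiag.filter (fun i => i.1 < i.2),
      Real.log ((Sym2.lift F s(q.1, q.2))^2) = 2 * Real.log (F.1 q.1 q.2) := by
    intro q hq
    rw [Sym2.lift_mk, Real.log_pow]
    push_cast
    ring
  calc Real.log (∏ p ∈ s.sym2.filter (fun p => ¬ p.IsDiag), (Sym2.lift F p)^2)
      = ∑ p ∈ s.sym2.filter (fun p => ¬ p.IsDiag), Real.log ((Sym2.lift F p)^2) :=
        Real.log_prod hne
    _ = ∑ q ∈ s.offDiag.filter (fun i => i.1 < i.2), Real.log ((Sym2.lift F s(q.1, q.2))^2) := by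
        have h := Finset.sum_sym2_filter_not_isDiag s (fun p => Real.log ((Sym2.lift F p)^2))
        convert h using 3
    _ = ∑ q ∈ s.offDiag.filter (fun i => i.1 < i.2), 2 * Real.log (F.1 q.1 q.2) :=
        Finset.sum_congr rfl hterm
    _ = 2 * ∑ q ∈ s.offDiag.filter (fun i => i.1 < i.2), Real.log (F.1 q.1 q.2) :=
        (Finset.mul_sum _ _ _).symm
    _ = ∑ p ∈ s.offDiag, Real.log (F.1 p.1 p.2) :=
        (sum_offDiag_two_mul s (fun x y => Real.log (F.1 x y))
          (fun x y => by show Real.log (F.1 x y) = Real.log (F.1 y x); rw [F.2 x y])).symm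

end Aux

theorem effective_radius_bounds_cubical_lump (ℓ : ℕ) (hℓ : 1 ≤ ℓ)
    (a r : ℝ) (ha : 0 < a) (hr : 0 < r) (h2r : 2 * r < a)
    (n : ℕ) (hn : n = (2 * ℓ + 1) ^ 3) (Reff : ℝ)
    (hReff : Reff =
      (r ^ n *
          ∏ p ∈ (latticeCube ℓ).sym2.filter (fun p => ¬ p.IsDiag),
            (Sym2.lift ⟨fun x y => dist (a • pt x) (a • pt y),
              fun _ _ => dist_comm _ _⟩ p) ^ 2) ^
        ((1 : ℝ) / (n : ℝ) ^ 2)) :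
    Real.exp (-1/3) * (r / a) ^ ((1 : ℝ) / (n : ℝ)) * ℓ * a ≤ Reff ∧
      Reff ≤ 2 * Real.sqrt 3 * (r / a) ^ ((1 : ℝ) / (n : ℝ)) * ℓ * a := by
  have hG : (latticeCube ℓ).card = n := by rw [hn, lattice_card]
  have hnpos : 0 < n := by rw [hn]; positivity
  have hm : (0:ℝ) < (n:ℝ) := by exact_mod_cast hnpos
  have hℓR : (1:ℝ) ≤ (ℓ:ℝ) := by exact_mod_cast hℓ
  have hℓpos : (0:ℝ) < (ℓ:ℝ) := by linarith
  have hd_pos : ∀ x y : ℤ×ℤ×ℤ, x ≠ y → 0 < dist (a • pt x) (a • pt y) := by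
    intro x y hxy
    rw [dist_smul₀, Real.norm_eq_abs, abs_of_pos ha]
    have := one_le_dist hxy
    nlinarith
  set G := latticeCube ℓ with hGdef
  set S := ∑ p ∈ G.offDiag, Real.log (dist (pt p.1) (pt p.2)) with hSdef
  have hlogP0 := @log_prod_sym2 (ℤ×ℤ×ℤ) _
    (inferInstanceAs (LinearOrder (ℤ ×ₗ ℤ ×ₗ ℤ))) (latticeCube ℓ)
    ⟨fun x y => dist (a • pt x) (a • pt y), fun _ _ => dist_comm _ _⟩ hd_pos
  have hsplit : ∑ p ∈ G.offDiag, Real.log (dist (a • pt p.1) (a • pt p.2))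
      = (G.offDiag.card : ℝ) * Real.log a + S := by
    have hterm : ∀ p ∈ G.offDiag, Real.log (dist (a • pt p.1) (a • pt p.2))
        = Real.log a + Real.log (dist (pt p.1) (pt p.2)) := by
      intro p hp
      rw [Finset.mem_offDiag] at hp
      rw [dist_smul₀, Real.norm_eq_abs, abs_of_pos ha,
        Real.log_mul (ne_of_gt ha) (by have := one_le_dist hp.2.2; positivity)]
    rw [Finset.sum_congr rfl hterm, Finset.sum_add_distrib, Finset.sum_const, nsmul_eq_mul,
      hSdef]
  have hlogP : Real.log (∏ p ∈ (latticeCube ℓ).sym2.filter (fun p => ¬ p.IsDiag),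
        (Sym2.lift ⟨fun x y => dist (a • pt x) (a • pt y),
          fun _ _ => dist_comm _ _⟩ p) ^ 2)
      = (G.offDiag.card : ℝ) * Real.log a + S := by
    rw [hlogP0]
    exact hsplit
  have hoffcard : ((G.offDiag.card : ℕ) : ℝ) = (n:ℝ)^2 - n := by
    rw [Finset.offDiag_card, hG]
    have hle : n ≤ n * n := Nat.le_mul_of_pos_left n hnpos
    push_cast [hle]
    ring
  have hS_eq : S = ∑ x ∈ G, ∑ j ∈ G.erase x, Real.log (dist (pt x) (pt j)) :=
    hSdef.trans (sum_offDiag_eq G (fun u v => Real.log (dist (pt u) (pt v))))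
  have hS_lower : (n:ℝ)^2 * (Real.log ℓ - 1/3) ≤ S := by
    rw [hS_eq]
    have hrow : ∀ x ∈ G, (n:ℝ) * (Real.log ℓ - 1/3)
        ≤ ∑ j ∈ G.erase x, Real.log (dist (pt x) (pt j)) := by
      intro x hx
      refine le_trans ?_ (row_lb hx)
      have hlb := cube_sum_lb ℓ
      have hcast : ((n:ℝ)) = (2*(ℓ:ℝ)+1)^3 := by rw [hn]; push_cast; ring
      rw [hcast]
      exact hlb
    calc (n:ℝ)^2 * (Real.log ℓ - 1/3)
        = ∑ _x ∈ G, (n:ℝ) * (Real.log ℓ - 1/3) := by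
          rw [Finset.sum_const, hG, nsmul_eq_mul]; ring
      _ ≤ _ := Finset.sum_le_sum hrow
  have hlog23 : (0:ℝ) ≤ Real.log (2 * Real.sqrt 3 * ℓ) := by
    apply Real.log_nonneg
    have h3 : (1:ℝ) ≤ Real.sqrt 3 := by
      rw [show (1:ℝ) = Real.sqrt 1 by simp]
      exact Real.sqrt_le_sqrt (by norm_num)
    nlinarith
  have hS_upper : S ≤ (n:ℝ)^2 * Real.log (2 * Real.sqrt 3 * ℓ) := by
    have hstep : S ≤ ∑ _p ∈ G.offDiag, Real.log (2 * Real.sqrt 3 * ℓ) := by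
      rw [hSdef]
      apply Finset.sum_le_sum
      intro p hp
      rw [Finset.mem_offDiag] at hp
      obtain ⟨hp1, hp2, hp3⟩ := hp
      exact Real.log_le_log (by have := one_le_dist hp3; linarith) (dist_le_diag hp1 hp2)
    refine le_trans hstep ?_
    rw [Finset.sum_const, nsmul_eq_mul]
    calc (G.offDiag.card : ℝ) * Real.log (2 * Real.sqrt 3 * ℓ)
        = ((n:ℝ)^2 - n) * Real.log (2 * Real.sqrt 3 * ℓ) := by rw [hoffcard]
      _ ≤ (n:ℝ)^2 * Real.log (2 * Real.sqrt 3 * ℓ) := by nlinarith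
  have hPpos : 0 < ∏ p ∈ (latticeCube ℓ).sym2.filter (fun p => ¬ p.IsDiag),
      (Sym2.lift ⟨fun x y => dist (a • pt x) (a • pt y),
        fun _ _ => dist_comm _ _⟩ p) ^ 2 := by
    apply Finset.prod_pos
    intro p hp
    rw [Finset.mem_filter] at hp
    obtain ⟨hp1, hp2⟩ := hp
    induction p using Sym2.ind with
    | _ x y =>
      rw [Sym2.lift_mk]
      have hxy : x ≠ y := by
        intro h; exact hp2 (by rw [h]; exact Sym2.isDiag_iff_proj_eq |>.mpr rfl)
      have := hd_pos x y hxy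
      positivity
  have hXpos : 0 < r ^ n * ∏ p ∈ (latticeCube ℓ).sym2.filter (fun p => ¬ p.IsDiag),
      (Sym2.lift ⟨fun x y => dist (a • pt x) (a • pt y),
        fun _ _ => dist_comm _ _⟩ p) ^ 2 := mul_pos (pow_pos hr n) hPpos
  have hReffpos : 0 < Reff := by
    rw [hReff]; exact Real.rpow_pos_of_pos hXpos _
  have hlogReff : Real.log Reff
      = (1 / (n:ℝ)^2) * ((n:ℝ) * Real.log r + (((n:ℝ)^2 - n) * Real.log a + S)) := by
    rw [hReff, Real.log_rpow hXpos, Real.log_mul (by positivity) (ne_of_gt hPpos),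
      Real.log_pow, hlogP, hoffcard]
  constructor
  · have hLpos : 0 < Real.exp (-1/3) * (r / a) ^ ((1:ℝ)/(n:ℝ)) * ℓ * a := by positivity
    rw [← Real.exp_log hReffpos, ← Real.exp_log hLpos]
    apply Real.exp_le_exp.mpr
    have hlogL : Real.log (Real.exp (-1/3) * (r / a) ^ ((1:ℝ)/(n:ℝ)) * ℓ * a)
        = (-1/3) + (1/(n:ℝ)) * (Real.log r - Real.log a) + Real.log ℓ + Real.log a := by
      rw [Real.log_mul (by positivity) (ne_of_gt ha),
        Real.log_mul (by positivity) (by positivity),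
        Real.log_mul (Real.exp_ne_zero _) (by positivity),
        Real.log_exp, Real.log_rpow (by positivity),
        Real.log_div (ne_of_gt hr) (ne_of_gt ha)]
    rw [hlogL, hlogReff]
    have e1 : (1 / (n:ℝ)^2) * ((n:ℝ) * Real.log r + (((n:ℝ)^2 - n) * Real.log a + S))
        - ((-1/3) + (1/(n:ℝ)) * (Real.log r - Real.log a) + Real.log ℓ + Real.log a)
        = (S - (n:ℝ)^2 * (Real.log ℓ - 1/3)) / (n:ℝ)^2 := by
      field_simp
      ring
    have e2 : (0:ℝ) ≤ (S - (n:ℝ)^2 * (Real.log ℓ - 1/3)) / (n:ℝ)^2 :=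
      div_nonneg (by linarith) (by positivity)
    linarith [e1 ▸ e2]
  · have hRpos : 0 < 2 * Real.sqrt 3 * (r / a) ^ ((1:ℝ)/(n:ℝ)) * ℓ * a := by positivity
    rw [← Real.exp_log hReffpos, ← Real.exp_log hRpos]
    apply Real.exp_le_exp.mpr
    have hsplit23 : Real.log (2 * Real.sqrt 3 * (ℓ:ℝ))
        = Real.log (2 * Real.sqrt 3) + Real.log ℓ :=
      Real.log_mul (by positivity) (ne_of_gt hℓpos)
    have hlogR : Real.log (2 * Real.sqrt 3 * (r / a) ^ ((1:ℝ)/(n:ℝ)) * ℓ * a)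
        = Real.log (2 * Real.sqrt 3) + Real.log ℓ
          + (1/(n:ℝ)) * (Real.log r - Real.log a) + Real.log a := by
      rw [Real.log_mul (by positivity) (ne_of_gt ha),
        Real.log_mul (by positivity) (ne_of_gt hℓpos),
        Real.log_mul (by positivity) (by positivity),
        Real.log_rpow (by positivity), Real.log_div (ne_of_gt hr) (ne_of_gt ha)]
      ring
    rw [hlogR, hlogReff]
    rw [hsplit23] at hS_upper
    have e1 : (Real.log (2 * Real.sqrt 3) + Real.log ℓ
          + (1/(n:ℝ)) * (Real.log r - Real.log a) + Real.log a)
        - (1 / (n:ℝ)^2) * ((n:ℝ) * Real.log r + (((n:ℝ)^2 - n) * Real.log a + S))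
        = ((n:ℝ)^2 * (Real.log (2 * Real.sqrt 3) + Real.log ℓ) - S) / (n:ℝ)^2 := by
      field_simp
      ring
    have e2 : (0:ℝ) ≤ ((n:ℝ)^2 * (Real.log (2 * Real.sqrt 3) + Real.log ℓ) - S) / (n:ℝ)^2 :=
      div_nonneg (by linarith) (by positivity)
    linarith [e1 ▸ e2]
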